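/- Let f₁ = X³ + Y³ + 3X²Z + 3Y²Z + 3XZ² + 3YZ² + 2Z³ and f₂ = X³ + XY² + X²Z + 2XYZ + 3Y²Z + 4XZ² + 2YZ² + 2Z³ in ℤ[X,Y,Z]. Then f₁ ≠ f₂, and f₁(A₂, C₂, G₂) = f₂(A₂, C₂, G₂) in ℤ[[q]] (i.e., at level ℓ = 7), while for every even integer d > 2 one has f₁(A_d, C_d, G_d) ≠ f₂(A_d, C_d, G_d) (i.e., the theta series differ at every level ℓ ≡ 7 mod 8 with ℓ > 7). -/

import Mathlib

noncomputable section

/-- The positive definite quadratic form `Q_d(x,y) = x² + xy + d y²`. -/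
def Qform (d : ℕ) (x y : ℤ) : ℤ := x ^ 2 + x * y + (d : ℤ) * y ^ 2

/-- The coset theta series `θ^{(2,d)}_{a,b}`. -/
def cosetTheta (d : ℕ) (a b : ℤ) : PowerSeries ℤ :=
  PowerSeries.mk fun k =>
    (Set.ncard {mn : ℤ × ℤ |
      Qform d (2 * mn.1 + a) (2 * mn.2 + b) = (k : ℤ)} : ℤ)

/-- `A_d = θ^{(2,d)}_{0,0}`. -/
def Az (d : ℕ) : PowerSeries ℤ := cosetTheta d 0 0
/-- `C_d = θ^{(2,d)}_{1,0}`. -/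
def Cz (d : ℕ) : PowerSeries ℤ := cosetTheta d 1 0
/-- `G_d = θ^{(2,d)}_{0,1}`. -/
def Gz (d : ℕ) : PowerSeries ℤ := cosetTheta d 0 1

open MvPolynomial in
/-- `f₁ = X³ + Y³ + 3X²Z + 3Y²Z + 3XZ² + 3YZ² + 2Z³`. -/
def f1 : MvPolynomial (Fin 3) ℤ :=
  X 0 ^ 3 + X 1 ^ 3 + 3 * X 0 ^ 2 * X 2 + 3 * X 1 ^ 2 * X 2 +
    3 * X 0 * X 2 ^ 2 + 3 * X 1 * X 2 ^ 2 + 2 * X 2 ^ 3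

open MvPolynomial in
/-- `f₂ = X³ + XY² + X²Z + 2XYZ + 3Y²Z + 4XZ² + 2YZ² + 2Z³`. -/
def f2 : MvPolynomial (Fin 3) ℤ :=
  X 0 ^ 3 + X 0 * X 1 ^ 2 + X 0 ^ 2 * X 2 + 2 * X 0 * X 1 * X 2 +
    3 * X 1 ^ 2 * X 2 + 4 * X 0 * X 2 ^ 2 + 2 * X 1 * X 2 ^ 2 + 2 * X 2 ^ 3

lemma qform_nonneg {d : ℕ} (hd : 1 ≤ d) (x y : ℤ) : 0 ≤ Qform d x y := by
  have h : (1:ℤ) ≤ (d:ℤ) := by exact_mod_cast hd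
  unfold Qform
  nlinarith [sq_nonneg (2*x+y), sq_nonneg y]

/-- the box -/
def box (k : ℕ) : Finset (ℤ × ℤ) :=
  Finset.Icc (-(2*(k:ℤ)+2), -(2*(k:ℤ)+2)) (2*(k:ℤ)+2, 2*(k:ℤ)+2)

lemma mem_box {k : ℕ} {a b m n : ℤ} (ha : 0 ≤ a) (ha1 : a ≤ 1) (hb : 0 ≤ b) (hb1 : b ≤ 1)
    (h : Qform 2 (2*m+a) (2*n+b) ≤ (k:ℤ)) : (m, n) ∈ box k := by
  have hk : (0:ℤ) ≤ (k:ℤ) := Int.ofNat_nonneg k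
  set x := 2*m+a with hx
  set y := 2*n+b with hy
  have hq : (2*x+y)^2 + 7*y^2 ≤ 4*(k:ℤ) := by
    have : Qform 2 x y = x^2 + x*y + 2*y^2 := by norm_num [Qform]
    nlinarith [h, this]
  have h1 : 2*(2*x+y) ≤ 4*(k:ℤ)+1 := by nlinarith [sq_nonneg (2*x+y-1), sq_nonneg y]
  have h2 : -(2*(2*x+y)) ≤ 4*(k:ℤ)+1 := by nlinarith [sq_nonneg (2*x+y+1), sq_nonneg y]
  have h3 : 2*y ≤ (k:ℤ)+1 := by nlinarith [sq_nonneg (y-1), sq_nonneg (2*x+y)]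
  have h4 : -(2*y) ≤ (k:ℤ)+1 := by nlinarith [sq_nonneg (y+1), sq_nonneg (2*x+y)]
  simp only [box, Finset.mem_Icc, Prod.mk_le_mk]
  omega

/-- fiber finset -/
def fib (a b : ℤ) (i : ℕ) : Finset (ℤ × ℤ) :=
  (box i).filter fun v => Qform 2 (2*v.1+a) (2*v.2+b) = (i:ℤ)

lemma coeff_cosetTheta (a b : ℤ) (ha : 0 ≤ a) (ha1 : a ≤ 1) (hb : 0 ≤ b) (hb1 : b ≤ 1)
    (k : ℕ) :
    PowerSeries.coeff k (cosetTheta 2 a b) = ((fib a b k).card : ℤ) := by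
  have hset : {mn : ℤ × ℤ | Qform 2 (2 * mn.1 + a) (2 * mn.2 + b) = (k : ℤ)}
      = ↑(fib a b k) := by
    ext ⟨m, n⟩
    simp only [Set.mem_setOf_eq, fib, Finset.coe_filter, Finset.mem_coe, Set.mem_setOf_eq]
    constructor
    · intro h
      exact ⟨mem_box ha ha1 hb hb1 (le_of_eq h), h⟩
    · exact fun h => h.2
  rw [cosetTheta, PowerSeries.coeff_mk, hset, Set.ncard_coe_finset]

/-- pair finset -/
def pairF (a b a' b' : ℤ) (k : ℕ) : Finset ((ℤ × ℤ) × (ℤ × ℤ)) :=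
  ((box k) ×ˢ (box k)).filter fun p =>
    Qform 2 (2*p.1.1+a) (2*p.1.2+b) + Qform 2 (2*p.2.1+a') (2*p.2.2+b') = (k:ℤ)

lemma biUnion_pairF (a b a' b' : ℤ) (ha : 0 ≤ a) (ha1 : a ≤ 1) (hb : 0 ≤ b) (hb1 : b ≤ 1)
    (ha' : 0 ≤ a') (ha1' : a' ≤ 1) (hb' : 0 ≤ b') (hb1' : b' ≤ 1) (k : ℕ) :
    (Finset.HasAntidiagonal.antidiagonal k).biUnion (fun p => (fib a b p.1) ×ˢ (fib a' b' p.2))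
      = pairF a b a' b' k := by
  ext ⟨⟨m1, n1⟩, ⟨m2, n2⟩⟩
  simp only [Finset.mem_biUnion, Finset.HasAntidiagonal.mem_antidiagonal, Finset.mem_product, fib,
    Finset.mem_filter, pairF]
  constructor
  · rintro ⟨⟨i, j⟩, hij, ⟨hbox1, h1⟩, ⟨hbox2, h2⟩⟩
    have hik : (i:ℤ) ≤ (k:ℤ) := by exact_mod_cast Nat.le.intro hij
    have hjk : (j:ℤ) ≤ (k:ℤ) := by
      have : j ≤ k := by omega
      exact_mod_cast this
    refine ⟨⟨mem_box ha ha1 hb hb1 (by omega), mem_box ha' ha1' hb' hb1' (by omega)⟩, ?_⟩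
    rw [h1, h2]
    exact_mod_cast congrArg (Nat.cast : ℕ → ℤ) hij
  · rintro ⟨⟨hbox1, hbox2⟩, hsum⟩
    have hq1 : 0 ≤ Qform 2 (2*m1+a) (2*n1+b) := qform_nonneg (by norm_num) _ _
    have hq2 : 0 ≤ Qform 2 (2*m2+a') (2*n2+b') := qform_nonneg (by norm_num) _ _
    refine ⟨⟨(Qform 2 (2*m1+a) (2*n1+b)).toNat, (Qform 2 (2*m2+a') (2*n2+b')).toNat⟩,
      by omega, ⟨?_, by omega⟩, ⟨?_, by omega⟩⟩
    · exact mem_box ha ha1 hb hb1 (by omega)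
    · exact mem_box ha' ha1' hb' hb1' (by omega)

lemma coeff_mul_theta (a b a' b' : ℤ) (ha : 0 ≤ a) (ha1 : a ≤ 1) (hb : 0 ≤ b) (hb1 : b ≤ 1)
    (ha' : 0 ≤ a') (ha1' : a' ≤ 1) (hb' : 0 ≤ b') (hb1' : b' ≤ 1) (k : ℕ) :
    PowerSeries.coeff k (cosetTheta 2 a b * cosetTheta 2 a' b')
      = ((pairF a b a' b' k).card : ℤ) := by
  rw [PowerSeries.coeff_mul]
  rw [← biUnion_pairF a b a' b' ha ha1 hb hb1 ha' ha1' hb' hb1' k]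
  rw [Finset.card_biUnion]
  · push_cast
    refine Finset.sum_congr rfl fun p _ => ?_
    rw [coeff_cosetTheta a b ha ha1 hb hb1, coeff_cosetTheta a' b' ha' ha1' hb' hb1',
      Finset.card_product]
    push_cast
    ring
  · rintro ⟨i, j⟩ hij ⟨i', j'⟩ hij' hne
    simp only [Finset.mem_coe, Finset.HasAntidiagonal.mem_antidiagonal] at hij hij'
    rw [Function.onFun, Finset.disjoint_left]
    rintro ⟨⟨m1, n1⟩, ⟨m2, n2⟩⟩ h1 h2
    simp only [Finset.mem_product, fib, Finset.mem_filter] at h1 h2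
    apply hne
    have : (i:ℤ) = (i':ℤ) := by rw [← h1.1.2, ← h2.1.2]
    have hii : i = i' := by exact_mod_cast this
    simp only [Prod.mk.injEq]
    omega

-- Φ direction, CC input (b = false)
lemma qCCe (m1 n1 m2 n2 σ τ k : ℤ) (hσ : m1+m2+n1+n2+1 = 2*σ) (hτ : m1-m2+n1-n2 = 2*τ+1)
    (hk : Qform 2 (2*m1+1) (2*n1+0) + Qform 2 (2*m2+1) (2*n2+0) = k) :
    Qform 2 (2 * -(n1+n2) + 0) (2*σ + 0) + Qform 2 (2*(n2-n1) + 0) (2*τ + 1) = k := by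
  have h1 : n2 = 2*σ - 1 - m1 - m2 - n1 := by omega
  subst h1
  have h2 : τ = m1 + n1 - σ := by omega
  subst h2
  unfold Qform at hk ⊢; push_cast at hk ⊢; linear_combination hk

lemma qCCo (m1 n1 m2 n2 σ τ k : ℤ) (hσ : m1+m2+n1+n2+1 = 2*σ+1) (hτ : m1-m2+n1-n2 = 2*τ)
    (hk : Qform 2 (2*m1+1) (2*n1+0) + Qform 2 (2*m2+1) (2*n2+0) = k) :
    Qform 2 (2 * -(n1+n2) + 0) (2*σ + 1) + Qform 2 (2*(n2-n1) + 0) (2*τ + 0) = k := by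
  have h1 : n2 = 2*σ - m1 - m2 - n1 := by omega
  subst h1
  have h2 : τ = m1 + n1 - σ := by omega
  subst h2
  unfold Qform at hk ⊢; push_cast at hk ⊢; linear_combination hk

-- Φ direction, GG input (b = true)
lemma qGGe (m1 n1 m2 n2 σ τ k : ℤ) (hσ : m1+m2+n1+n2+1 = 2*σ) (hτ : m1-m2+n1-n2 = 2*τ+1)
    (hk : Qform 2 (2*m1+0) (2*n1+1) + Qform 2 (2*m2+0) (2*n2+1) = k) :
    Qform 2 (2 * (-(n1+n2) - 1) + 0) (2*σ + 0) + Qform 2 (2*(n2-n1) + 0) (2*τ + 1) = k := by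
  have h1 : n2 = 2*σ - 1 - m1 - m2 - n1 := by omega
  subst h1
  have h2 : τ = m1 + n1 - σ := by omega
  subst h2
  unfold Qform at hk ⊢; push_cast at hk ⊢; linear_combination hk

lemma qGGo (m1 n1 m2 n2 σ τ k : ℤ) (hσ : m1+m2+n1+n2+1 = 2*σ+1) (hτ : m1-m2+n1-n2 = 2*τ)
    (hk : Qform 2 (2*m1+0) (2*n1+1) + Qform 2 (2*m2+0) (2*n2+1) = k) :
    Qform 2 (2 * (-(n1+n2) - 1) + 0) (2*σ + 1) + Qform 2 (2*(n2-n1) + 0) (2*τ + 0) = k := by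
  have h1 : n2 = 2*σ - m1 - m2 - n1 := by omega
  subst h1
  have h2 : τ = m1 + n1 - σ := by omega
  subst h2
  unfold Qform at hk ⊢; push_cast at hk ⊢; linear_combination hk

-- Ψ direction, AG input (c = false)
lemma qAGe (u v u' v' M1 N1 M2 N2 k : ℤ)
    (h1 : u+u'+2*v+2*v'+1 = 2*M1+1) (h2 : -(u+u') = 2*N1)
    (h3 : u-u'+2*v-2*v'+(-1) = 2*M2+1) (h4 : u'-u = 2*N2)
    (hk : Qform 2 (2*u+0) (2*v+0) + Qform 2 (2*u'+0) (2*v'+1) = k) :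
    Qform 2 (2*M1+1) (2*N1+0) + Qform 2 (2*M2+1) (2*N2+0) = k := by
  have e1 : u = -2*N1 - u' := by omega
  subst e1
  have e2 : v' = M1 + N1 - v := by omega
  subst e2
  have e3 : u' = 2*v - 2*N1 - M1 - M2 - 1 := by omega
  subst e3
  have e4 : N2 = 2*v - N1 - M1 - M2 - 1 := by omega
  subst e4
  unfold Qform at hk ⊢; push_cast at hk ⊢; linear_combination hk

lemma qAGo (u v u' v' M1 N1 M2 N2 k : ℤ)
    (h1 : u+u'+2*v+2*v'+1 = 2*M1) (h2 : -(u+u') = 2*N1+1)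
    (h3 : u-u'+2*v-2*v'+(-1) = 2*M2) (h4 : u'-u = 2*N2+1)
    (hk : Qform 2 (2*u+0) (2*v+0) + Qform 2 (2*u'+0) (2*v'+1) = k) :
    Qform 2 (2*M1+0) (2*N1+1) + Qform 2 (2*M2+0) (2*N2+1) = k := by
  have e1 : u = -2*N1 - 1 - u' := by omega
  subst e1
  have e2 : v' = M1 + N1 - v := by omega
  subst e2
  have e3 : u' = 2*v - 2*N1 - M1 - M2 - 1 := by omega
  subst e3
  have e4 : N2 = 2*v - N1 - M1 - M2 - 1 := by omega
  subst e4
  unfold Qform at hk ⊢; push_cast at hk ⊢; linear_combination hk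

-- Ψ direction, GA input (c = true)
lemma qGAe (u v u' v' M1 N1 M2 N2 k : ℤ)
    (h1 : u+u'+2*v+2*v'+1 = 2*M1+1) (h2 : -(u+u') = 2*N1)
    (h3 : u-u'+2*v-2*v'+1 = 2*M2+1) (h4 : u'-u = 2*N2)
    (hk : Qform 2 (2*u+0) (2*v+1) + Qform 2 (2*u'+0) (2*v'+0) = k) :
    Qform 2 (2*M1+1) (2*N1+0) + Qform 2 (2*M2+1) (2*N2+0) = k := by
  have e1 : u = -2*N1 - u' := by omega
  subst e1
  have e2 : v' = M1 + N1 - v := by omega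
  subst e2
  have e3 : u' = 2*v - 2*N1 - M1 - M2 := by omega
  subst e3
  have e4 : N2 = 2*v - N1 - M1 - M2 := by omega
  subst e4
  unfold Qform at hk ⊢; push_cast at hk ⊢; linear_combination hk

lemma qGAo (u v u' v' M1 N1 M2 N2 k : ℤ)
    (h1 : u+u'+2*v+2*v'+1 = 2*M1) (h2 : -(u+u') = 2*N1+1)
    (h3 : u-u'+2*v-2*v'+1 = 2*M2) (h4 : u'-u = 2*N2+1)
    (hk : Qform 2 (2*u+0) (2*v+1) + Qform 2 (2*u'+0) (2*v'+0) = k) :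
    Qform 2 (2*M1+0) (2*N1+1) + Qform 2 (2*M2+0) (2*N2+1) = k := by
  have e1 : u = -2*N1 - 1 - u' := by omega
  subst e1
  have e2 : v' = M1 + N1 - v := by omega
  subst e2
  have e3 : u' = 2*v - 2*N1 - M1 - M2 := by omega
  subst e3
  have e4 : N2 = 2*v - N1 - M1 - M2 := by omega
  subst e4
  unfold Qform at hk ⊢; push_cast at hk ⊢; linear_combination hk

def PhiM : Bool × ((ℤ × ℤ) × (ℤ × ℤ)) → Bool × ((ℤ × ℤ) × (ℤ × ℤ)) := fun x =>
  (decide ((x.2.1.1 + x.2.2.1 + x.2.1.2 + x.2.2.2 + 1) % 2 = 1),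
   ((-(x.2.1.2 + x.2.2.2) - (if x.1 then 1 else 0),
     (x.2.1.1 + x.2.2.1 + x.2.1.2 + x.2.2.2 + 1) / 2),
    (x.2.2.2 - x.2.1.2,
     (x.2.1.1 - x.2.2.1 + x.2.1.2 - x.2.2.2) / 2)))

def PsiM : Bool × ((ℤ × ℤ) × (ℤ × ℤ)) → Bool × ((ℤ × ℤ) × (ℤ × ℤ)) := fun y =>
  (decide ((y.2.1.1 + y.2.2.1) % 2 = 1),
   (((y.2.1.1 + y.2.2.1 + 2*y.2.1.2 + 2*y.2.2.2 + 1) / 2,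
     (-(y.2.1.1 + y.2.2.1)) / 2),
    ((y.2.1.1 - y.2.2.1 + 2*y.2.1.2 - 2*y.2.2.2 + (if y.1 then 1 else -1)) / 2,
     (y.2.2.1 - y.2.1.1) / 2)))

lemma psi_phi (x : Bool × ((ℤ × ℤ) × (ℤ × ℤ))) : PsiM (PhiM x) = x := by
  obtain ⟨b, ⟨⟨m1, n1⟩, ⟨m2, n2⟩⟩⟩ := x
  cases b <;> simp only [PhiM, PsiM, if_false, if_true] <;>
    by_cases hs : (m1 + m2 + n1 + n2 + 1) % 2 = 1 <;>
    simp only [hs, decide_true, decide_false, Bool.false_eq_true, eq_self_iff_true, if_true, if_false, Prod.mk.injEq,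
      decide_eq_false_iff_not, decide_eq_true_eq] <;>
    refine ⟨?_, ⟨?_, ?_⟩, ⟨?_, ?_⟩⟩ <;> omega

lemma phi_psi (y : Bool × ((ℤ × ℤ) × (ℤ × ℤ))) : PhiM (PsiM y) = y := by
  obtain ⟨c, ⟨⟨u, v⟩, ⟨u', v'⟩⟩⟩ := y
  cases c <;> simp only [PhiM, PsiM, if_false, if_true] <;>
    by_cases hs : (u + u') % 2 = 1 <;>
    simp only [hs, decide_true, decide_false, Bool.false_eq_true, eq_self_iff_true, if_true, if_false, Prod.mk.injEq,
      decide_eq_false_iff_not, decide_eq_true_eq] <;>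
    refine ⟨?_, ⟨?_, ?_⟩, ⟨?_, ?_⟩⟩ <;> omega

def U1 (k : ℕ) : Finset (Bool × ((ℤ × ℤ) × (ℤ × ℤ))) :=
  ({false} ×ˢ pairF 1 0 1 0 k) ∪ ({true} ×ˢ pairF 0 1 0 1 k)

def U2 (k : ℕ) : Finset (Bool × ((ℤ × ℤ) × (ℤ × ℤ))) :=
  ({false} ×ˢ pairF 0 0 0 1 k) ∪ ({true} ×ˢ pairF 0 1 0 0 k)

lemma phi_maps {k : ℕ} : ∀ x ∈ U1 k, PhiM x ∈ U2 k := by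
  rintro ⟨b, ⟨⟨m1, n1⟩, ⟨m2, n2⟩⟩⟩ hx
  cases b <;>
    simp only [U1, pairF, Finset.mem_union, Finset.mem_product, Finset.mem_singleton,
      Finset.mem_filter, Bool.false_eq_true, Bool.true_eq_false, false_and, and_false,
      false_or, or_false, true_and, and_true, eq_self_iff_true] at hx <;>
  obtain ⟨⟨hb1, hb2⟩, hk⟩ := hx <;>
  simp only [PhiM, Bool.false_eq_true, eq_self_iff_true, if_true, if_false, sub_zero] <;>
  set σ := (m1 + m2 + n1 + n2 + 1) / 2 with hσd <;>
  set τ := (m1 - m2 + n1 - n2) / 2 with hτd <;>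
  simp only [U2, pairF, Finset.mem_union, Finset.mem_product, Finset.mem_singleton,
    Finset.mem_filter] <;>
  by_cases hs : (m1 + m2 + n1 + n2 + 1) % 2 = 1
  · -- CC, s odd → GA
    rw [decide_eq_true hs]
    have hσ : m1 + m2 + n1 + n2 + 1 = 2*σ + 1 := by omega
    have hτ : m1 - m2 + n1 - n2 = 2*τ := by omega
    have hQ := qCCo m1 n1 m2 n2 σ τ k hσ hτ hk
    have hq1 : 0 ≤ Qform 2 (2 * -(n1+n2) + 0) (2*σ + 1) := qform_nonneg (by norm_num) _ _
    have hq2 : 0 ≤ Qform 2 (2*(n2-n1) + 0) (2*τ + 0) := qform_nonneg (by norm_num) _ _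
    exact Or.inr ⟨rfl, ⟨mem_box (a := 0) (b := 1) (by norm_num) (by norm_num) (by norm_num)
        (by norm_num) (by linarith), mem_box (a := 0) (b := 0) (by norm_num) (by norm_num)
        (by norm_num) (by norm_num) (by linarith)⟩, hQ⟩
  · -- CC, s even → AG
    rw [decide_eq_false hs]
    have hσ : m1 + m2 + n1 + n2 + 1 = 2*σ := by omega
    have hτ : m1 - m2 + n1 - n2 = 2*τ + 1 := by omega
    have hQ := qCCe m1 n1 m2 n2 σ τ k hσ hτ hk
    have hq1 : 0 ≤ Qform 2 (2 * -(n1+n2) + 0) (2*σ + 0) := qform_nonneg (by norm_num) _ _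
    have hq2 : 0 ≤ Qform 2 (2*(n2-n1) + 0) (2*τ + 1) := qform_nonneg (by norm_num) _ _
    exact Or.inl ⟨rfl, ⟨mem_box (a := 0) (b := 0) (by norm_num) (by norm_num) (by norm_num)
        (by norm_num) (by linarith), mem_box (a := 0) (b := 1) (by norm_num) (by norm_num)
        (by norm_num) (by norm_num) (by linarith)⟩, hQ⟩
  · -- GG, s odd → GA
    rw [decide_eq_true hs]
    have hσ : m1 + m2 + n1 + n2 + 1 = 2*σ + 1 := by omega
    have hτ : m1 - m2 + n1 - n2 = 2*τ := by omega
    have hQ := qGGo m1 n1 m2 n2 σ τ k hσ hτ hk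
    have hq1 : 0 ≤ Qform 2 (2 * (-(n1+n2) - 1) + 0) (2*σ + 1) := qform_nonneg (by norm_num) _ _
    have hq2 : 0 ≤ Qform 2 (2*(n2-n1) + 0) (2*τ + 0) := qform_nonneg (by norm_num) _ _
    exact Or.inr ⟨rfl, ⟨mem_box (a := 0) (b := 1) (by norm_num) (by norm_num) (by norm_num)
        (by norm_num) (by linarith), mem_box (a := 0) (b := 0) (by norm_num) (by norm_num)
        (by norm_num) (by norm_num) (by linarith)⟩, hQ⟩
  · -- GG, s even → AG
    rw [decide_eq_false hs]
    have hσ : m1 + m2 + n1 + n2 + 1 = 2*σ := by omega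
    have hτ : m1 - m2 + n1 - n2 = 2*τ + 1 := by omega
    have hQ := qGGe m1 n1 m2 n2 σ τ k hσ hτ hk
    have hq1 : 0 ≤ Qform 2 (2 * (-(n1+n2) - 1) + 0) (2*σ + 0) := qform_nonneg (by norm_num) _ _
    have hq2 : 0 ≤ Qform 2 (2*(n2-n1) + 0) (2*τ + 1) := qform_nonneg (by norm_num) _ _
    exact Or.inl ⟨rfl, ⟨mem_box (a := 0) (b := 0) (by norm_num) (by norm_num) (by norm_num)
        (by norm_num) (by linarith), mem_box (a := 0) (b := 1) (by norm_num) (by norm_num)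
        (by norm_num) (by norm_num) (by linarith)⟩, hQ⟩

lemma psi_maps {k : ℕ} : ∀ y ∈ U2 k, PsiM y ∈ U1 k := by
  rintro ⟨c, ⟨⟨u, v⟩, ⟨u', v'⟩⟩⟩ hy
  cases c <;>
    simp only [U2, pairF, Finset.mem_union, Finset.mem_product, Finset.mem_singleton,
      Finset.mem_filter, Bool.false_eq_true, Bool.true_eq_false, false_and, and_false,
      false_or, or_false, true_and, and_true, eq_self_iff_true] at hy <;>
  obtain ⟨⟨hb1, hb2⟩, hk⟩ := hy <;>
  simp only [PsiM, Bool.false_eq_true, eq_self_iff_true, if_true, if_false] <;>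
  simp only [U1, pairF, Finset.mem_union, Finset.mem_product, Finset.mem_singleton,
    Finset.mem_filter] <;>
  by_cases hs : (u + u') % 2 = 1
  · -- AG, u+u' odd → GG
    rw [decide_eq_true hs]
    set M1 := (u + u' + 2*v + 2*v' + 1) / 2 with hM1d
    set N1 := (-(u + u')) / 2 with hN1d
    set M2 := (u - u' + 2*v - 2*v' + -1) / 2 with hM2d
    set N2 := (u' - u) / 2 with hN2d
    have h1 : u + u' + 2*v + 2*v' + 1 = 2*M1 := by omega
    have h2 : -(u + u') = 2*N1 + 1 := by omega
    have h3 : u - u' + 2*v - 2*v' + -1 = 2*M2 := by omega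
    have h4 : u' - u = 2*N2 + 1 := by omega
    have hQ := qAGo u v u' v' M1 N1 M2 N2 k h1 h2 h3 h4 hk
    have hq1 : 0 ≤ Qform 2 (2*M1+0) (2*N1+1) := qform_nonneg (by norm_num) _ _
    have hq2 : 0 ≤ Qform 2 (2*M2+0) (2*N2+1) := qform_nonneg (by norm_num) _ _
    exact Or.inr ⟨rfl, ⟨mem_box (a := 0) (b := 1) (by norm_num) (by norm_num) (by norm_num)
      (by norm_num) (by linarith), mem_box (a := 0) (b := 1) (by norm_num) (by norm_num)
      (by norm_num) (by norm_num) (by linarith)⟩, hQ⟩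
  · -- AG, u+u' even → CC
    rw [decide_eq_false hs]
    set M1 := (u + u' + 2*v + 2*v' + 1) / 2 with hM1d
    set N1 := (-(u + u')) / 2 with hN1d
    set M2 := (u - u' + 2*v - 2*v' + -1) / 2 with hM2d
    set N2 := (u' - u) / 2 with hN2d
    have h1 : u + u' + 2*v + 2*v' + 1 = 2*M1 + 1 := by omega
    have h2 : -(u + u') = 2*N1 := by omega
    have h3 : u - u' + 2*v - 2*v' + -1 = 2*M2 + 1 := by omega
    have h4 : u' - u = 2*N2 := by omega
    have hQ := qAGe u v u' v' M1 N1 M2 N2 k h1 h2 h3 h4 hk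
    have hq1 : 0 ≤ Qform 2 (2*M1+1) (2*N1+0) := qform_nonneg (by norm_num) _ _
    have hq2 : 0 ≤ Qform 2 (2*M2+1) (2*N2+0) := qform_nonneg (by norm_num) _ _
    exact Or.inl ⟨rfl, ⟨mem_box (a := 1) (b := 0) (by norm_num) (by norm_num) (by norm_num)
      (by norm_num) (by linarith), mem_box (a := 1) (b := 0) (by norm_num) (by norm_num)
      (by norm_num) (by norm_num) (by linarith)⟩, hQ⟩
  · -- GA, u+u' odd → GG
    rw [decide_eq_true hs]
    set M1 := (u + u' + 2*v + 2*v' + 1) / 2 with hM1d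
    set N1 := (-(u + u')) / 2 with hN1d
    set M2 := (u - u' + 2*v - 2*v' + 1) / 2 with hM2d
    set N2 := (u' - u) / 2 with hN2d
    have h1 : u + u' + 2*v + 2*v' + 1 = 2*M1 := by omega
    have h2 : -(u + u') = 2*N1 + 1 := by omega
    have h3 : u - u' + 2*v - 2*v' + 1 = 2*M2 := by omega
    have h4 : u' - u = 2*N2 + 1 := by omega
    have hQ := qGAo u v u' v' M1 N1 M2 N2 k h1 h2 h3 h4 hk
    have hq1 : 0 ≤ Qform 2 (2*M1+0) (2*N1+1) := qform_nonneg (by norm_num) _ _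
    have hq2 : 0 ≤ Qform 2 (2*M2+0) (2*N2+1) := qform_nonneg (by norm_num) _ _
    exact Or.inr ⟨rfl, ⟨mem_box (a := 0) (b := 1) (by norm_num) (by norm_num) (by norm_num)
      (by norm_num) (by linarith), mem_box (a := 0) (b := 1) (by norm_num) (by norm_num)
      (by norm_num) (by norm_num) (by linarith)⟩, hQ⟩
  · -- GA, u+u' even → CC
    rw [decide_eq_false hs]
    set M1 := (u + u' + 2*v + 2*v' + 1) / 2 with hM1d
    set N1 := (-(u + u')) / 2 with hN1d
    set M2 := (u - u' + 2*v - 2*v' + 1) / 2 with hM2d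
    set N2 := (u' - u) / 2 with hN2d
    have h1 : u + u' + 2*v + 2*v' + 1 = 2*M1 + 1 := by omega
    have h2 : -(u + u') = 2*N1 := by omega
    have h3 : u - u' + 2*v - 2*v' + 1 = 2*M2 + 1 := by omega
    have h4 : u' - u = 2*N2 := by omega
    have hQ := qGAe u v u' v' M1 N1 M2 N2 k h1 h2 h3 h4 hk
    have hq1 : 0 ≤ Qform 2 (2*M1+1) (2*N1+0) := qform_nonneg (by norm_num) _ _
    have hq2 : 0 ≤ Qform 2 (2*M2+1) (2*N2+0) := qform_nonneg (by norm_num) _ _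
    exact Or.inl ⟨rfl, ⟨mem_box (a := 1) (b := 0) (by norm_num) (by norm_num) (by norm_num)
      (by norm_num) (by linarith), mem_box (a := 1) (b := 0) (by norm_num) (by norm_num)
      (by norm_num) (by norm_num) (by linarith)⟩, hQ⟩

lemma cardU : ∀ k : ℕ, (U1 k).card = (U2 k).card := fun k =>
  Finset.card_bij' (fun a _ => PhiM a) (fun a _ => PsiM a) phi_maps psi_maps
    (fun a _ => psi_phi a) (fun a _ => phi_psi a)

lemma card_split (P Q : Finset ((ℤ × ℤ) × (ℤ × ℤ))) :
    (({false} ×ˢ P) ∪ ({true} ×ˢ Q)).card = P.card + Q.card := by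
  rw [Finset.card_union_of_disjoint, Finset.card_product, Finset.card_product]
  · simp
  · rw [Finset.disjoint_left]
    rintro ⟨b, p⟩ h1 h2
    simp only [Finset.mem_product, Finset.mem_singleton] at h1 h2
    rw [h1.1] at h2
    exact absurd h2.1 (by simp)

lemma cards (k : ℕ) : (pairF 1 0 1 0 k).card + (pairF 0 1 0 1 k).card
    = (pairF 0 0 0 1 k).card + (pairF 0 1 0 0 k).card := by
  have := cardU k
  rwa [U1, U2, card_split, card_split] at this

lemma key : (Cz 2) * (Cz 2) + (Gz 2) * (Gz 2) = (Az 2) * (Gz 2) + (Gz 2) * (Az 2) := by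
  ext k
  rw [map_add, map_add, Az, Cz, Gz]
  rw [coeff_mul_theta 1 0 1 0 (by norm_num) (by norm_num) (by norm_num) (by norm_num)
      (by norm_num) (by norm_num) (by norm_num) (by norm_num),
    coeff_mul_theta 0 1 0 1 (by norm_num) (by norm_num) (by norm_num) (by norm_num)
      (by norm_num) (by norm_num) (by norm_num) (by norm_num),
    coeff_mul_theta 0 0 0 1 (by norm_num) (by norm_num) (by norm_num) (by norm_num)
      (by norm_num) (by norm_num) (by norm_num) (by norm_num),
    coeff_mul_theta 0 1 0 0 (by norm_num) (by norm_num) (by norm_num) (by norm_num)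
      (by norm_num) (by norm_num) (by norm_num) (by norm_num)]
  exact_mod_cast cards k

lemma four_dvd_absurd (t : ℤ) (r : ℤ) (h : 4 * t = r) (h1 : r = 1 ∨ r = 2) : False := by
  rcases h1 with rfl | rfl
  · have : (4:ℤ) ∣ 1 := ⟨t, h.symm⟩
    norm_num at this
  · have : (4:ℤ) ∣ 2 := ⟨t, h.symm⟩
    norm_num at this

lemma n_sq_zero {d : ℕ} (hd' : (3:ℤ) ≤ (d:ℤ)) {x y n c : ℤ} (hc : c ≤ 2) (hy : y = 2*n)
    (h : x^2 + x*y + (d:ℤ)*y^2 = c) : n = 0 := by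
  subst hy
  have key : (x+n)^2 + (4*(d:ℤ)-1)*n^2 = c := by linear_combination h
  have hn2 : n^2 = 0 := le_antisymm
    (by nlinarith [sq_nonneg (x+n), mul_le_mul_of_nonneg_right hd' (sq_nonneg n)])
    (sq_nonneg n)
  exact pow_eq_zero_iff (n := 2) (by norm_num) |>.mp hn2

open PowerSeries in
lemma dvd_Az {d : ℕ} (hd : 3 ≤ d) : (X : PowerSeries ℤ)^3 ∣ (Az d - 1) := by
  have hd' : (3:ℤ) ≤ (d:ℤ) := by exact_mod_cast hd
  rw [PowerSeries.X_pow_dvd_iff]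
  intro m hm
  rw [map_sub, Az, cosetTheta, PowerSeries.coeff_mk]
  interval_cases m
  · have : {mn : ℤ × ℤ | Qform d (2 * mn.1 + 0) (2 * mn.2 + 0) = ((0:ℕ) : ℤ)}
        = {((0:ℤ), (0:ℤ))} := by
      ext ⟨m, n⟩
      simp only [Set.mem_setOf_eq, Set.mem_singleton_iff, Prod.mk.injEq, Qform]
      constructor
      · intro h
        push_cast at h
        have hn : n = 0 := n_sq_zero hd' (by norm_num) (by ring) h
        subst hn
        have hm2 : m^2 = 0 := le_antisymm (by nlinarith) (sq_nonneg m)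
        have hm : m = 0 := pow_eq_zero_iff (n := 2) (by norm_num) |>.mp hm2
        exact ⟨hm, by norm_num⟩
      · rintro ⟨rfl, rfl⟩; push_cast; ring
    rw [this]
    simp
  · have : {mn : ℤ × ℤ | Qform d (2 * mn.1 + 0) (2 * mn.2 + 0) = ((1:ℕ) : ℤ)} = ∅ := by
      rw [Set.eq_empty_iff_forall_notMem]
      rintro ⟨m, n⟩ h
      simp only [Set.mem_setOf_eq, Qform] at h
      push_cast at h
      exact four_dvd_absurd (m^2 + m*n + (d:ℤ)*n^2) 1 (by linear_combination h) (Or.inl rfl)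
    rw [this]
    simp
  · have : {mn : ℤ × ℤ | Qform d (2 * mn.1 + 0) (2 * mn.2 + 0) = ((2:ℕ) : ℤ)} = ∅ := by
      rw [Set.eq_empty_iff_forall_notMem]
      rintro ⟨m, n⟩ h
      simp only [Set.mem_setOf_eq, Qform] at h
      push_cast at h
      exact four_dvd_absurd (m^2 + m*n + (d:ℤ)*n^2) 2 (by linear_combination h) (Or.inr rfl)
    rw [this]
    simp

open PowerSeries in
lemma dvd_Gz {d : ℕ} (hd : 3 ≤ d) : (X : PowerSeries ℤ)^3 ∣ (Gz d) := by
  have hd' : (3:ℤ) ≤ (d:ℤ) := by exact_mod_cast hd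
  rw [PowerSeries.X_pow_dvd_iff]
  intro m hm
  rw [Gz, cosetTheta, PowerSeries.coeff_mk]
  have hk : ((m:ℤ)) ≤ 2 := by exact_mod_cast Nat.lt_succ_iff.mp hm
  have : {mn : ℤ × ℤ | Qform d (2 * mn.1 + 0) (2 * mn.2 + 1) = ((m:ℕ) : ℤ)} = ∅ := by
    rw [Set.eq_empty_iff_forall_notMem]
    rintro ⟨x, n⟩ h
    simp only [Set.mem_setOf_eq, Qform] at h
    push_cast at h
    have hodd : 1 ≤ (2*n+1)^2 := by rcases le_or_gt 0 n with h'|h' <;> nlinarith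
    have key : (2*(2*x+0)+(2*n+1))^2 + (4*(d:ℤ)-1)*(2*n+1)^2 = 4*(m:ℤ) := by
      linear_combination 4*h
    linarith [sq_nonneg (2*(2*x+0)+(2*n+1)), key, hk,
      mul_le_mul (by linarith : (11:ℤ) ≤ 4*(d:ℤ)-1) hodd (by norm_num) (by linarith)]
  rw [this]
  simp

open PowerSeries in
lemma dvd_Cz {d : ℕ} (hd : 3 ≤ d) :
    (X : PowerSeries ℤ)^3 ∣ (Cz d - PowerSeries.C 2 * X) := by
  have hd' : (3:ℤ) ≤ (d:ℤ) := by exact_mod_cast hd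
  rw [PowerSeries.X_pow_dvd_iff]
  intro m hm
  rw [map_sub, Cz, cosetTheta, PowerSeries.coeff_mk, PowerSeries.coeff_C_mul]
  interval_cases m
  · have : {mn : ℤ × ℤ | Qform d (2 * mn.1 + 1) (2 * mn.2 + 0) = ((0:ℕ) : ℤ)} = ∅ := by
      rw [Set.eq_empty_iff_forall_notMem]
      rintro ⟨m, n⟩ h
      simp only [Set.mem_setOf_eq, Qform] at h
      push_cast at h
      have hn : n = 0 := n_sq_zero hd' (by norm_num) (by ring) h
      subst hn
      have h' : (4:ℤ) * (m^2 + m) = -1 := by linear_combination h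
      have : (4:ℤ) ∣ -1 := ⟨m^2+m, h'.symm⟩
      norm_num at this
    rw [this]
    simp
  · have : {mn : ℤ × ℤ | Qform d (2 * mn.1 + 1) (2 * mn.2 + 0) = ((1:ℕ) : ℤ)}
        = {((0:ℤ), (0:ℤ)), ((-1:ℤ), (0:ℤ))} := by
      ext ⟨m, n⟩
      simp only [Set.mem_setOf_eq, Set.mem_insert_iff, Set.mem_singleton_iff,
        Prod.mk.injEq, Qform]
      constructor
      · intro h
        push_cast at h
        have hn : n = 0 := n_sq_zero hd' (by norm_num) (by ring) h
        subst hn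
        have h'' : (4:ℤ) * (m * (m + 1)) = 0 := by linear_combination h
        have h' : m * (m + 1) = 0 := by linarith
        rcases mul_eq_zero.mp h' with h3 | h3
        · exact Or.inl ⟨h3, rfl⟩
        · exact Or.inr ⟨by omega, rfl⟩
      · rintro (⟨rfl, rfl⟩ | ⟨rfl, rfl⟩) <;> push_cast <;> ring
    rw [this, Set.ncard_pair (by simp [Prod.ext_iff])]
    simp
  · have : {mn : ℤ × ℤ | Qform d (2 * mn.1 + 1) (2 * mn.2 + 0) = ((2:ℕ) : ℤ)} = ∅ := by
      rw [Set.eq_empty_iff_forall_notMem]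
      rintro ⟨m, n⟩ h
      simp only [Set.mem_setOf_eq, Qform] at h
      push_cast at h
      have hn : n = 0 := n_sq_zero hd' (by norm_num) (by ring) h
      subst hn
      have h' : (4:ℤ) * (m^2 + m) = 1 := by linear_combination h
      exact four_dvd_absurd _ 1 h' (Or.inl rfl)
    rw [this]
    simp [PowerSeries.coeff_X]

def Iq : Ideal (PowerSeries ℤ) := Ideal.span {(PowerSeries.X : PowerSeries ℤ)^3}

def phiq : PowerSeries ℤ →ₐ[ℤ] PowerSeries ℤ ⧸ Iq := Ideal.Quotient.mkₐ ℤ Iq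

lemma phiq_zero (f : PowerSeries ℤ) (hf : (PowerSeries.X : PowerSeries ℤ)^3 ∣ f) :
    phiq f = 0 := by
  rw [phiq, Ideal.Quotient.mkₐ_eq_mk, Ideal.Quotient.eq_zero_iff_mem, Iq,
    Ideal.mem_span_singleton]
  exact hf

lemma phiq_dvd {f g : PowerSeries ℤ} (h : phiq f = phiq g) :
    (PowerSeries.X : PowerSeries ℤ)^3 ∣ (f - g) := by
  rw [phiq, Ideal.Quotient.mkₐ_eq_mk] at h
  have := (Ideal.Quotient.eq).mp h
  rwa [Iq, Ideal.mem_span_singleton] at this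

theorem stmt11 :
    f1 ≠ f2 ∧
    MvPolynomial.aeval ![Az 2, Cz 2, Gz 2] f1 =
      MvPolynomial.aeval ![Az 2, Cz 2, Gz 2] f2 ∧
    (∀ d : ℕ, 2 < d → Even d →
      MvPolynomial.aeval ![Az d, Cz d, Gz d] f1 ≠
        MvPolynomial.aeval ![Az d, Cz d, Gz d] f2) := by
  refine ⟨?_, ?_, ?_⟩
  · intro h
    have := congrArg (MvPolynomial.eval ![(0:ℤ), 1, 0]) h
    simp [f1, f2] at this
  · have hfac : MvPolynomial.aeval ![Az 2, Cz 2, Gz 2] f1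
        - MvPolynomial.aeval ![Az 2, Cz 2, Gz 2] f2
        = (Cz 2 - Az 2) * ((Cz 2 * Cz 2 + Gz 2 * Gz 2) - (Az 2 * Gz 2 + Gz 2 * Az 2)) := by
      simp only [f1, f2, map_add, map_mul, map_pow, map_ofNat, MvPolynomial.aeval_X,
        Matrix.cons_val_zero, Matrix.cons_val_one, Matrix.head_cons, Matrix.cons_val_two,
        Matrix.tail_cons]
      ring
    rw [key, sub_self, mul_zero] at hfac
    exact sub_eq_zero.mp hfac
  · intro d hd _ heq
    have hd3 : 3 ≤ d := hd
    have hA : phiq (Az d) = phiq 1 := by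
      rw [← sub_eq_zero, ← map_sub]; exact phiq_zero _ (dvd_Az hd3)
    have hC : phiq (Cz d) = phiq (PowerSeries.C 2 * PowerSeries.X) := by
      rw [← sub_eq_zero, ← map_sub]; exact phiq_zero _ (dvd_Cz hd3)
    have hG : phiq (Gz d) = phiq 0 := by
      rw [map_zero]; exact phiq_zero _ (dvd_Gz hd3)
    have h1 := congrArg phiq heq
    rw [MvPolynomial.comp_aeval_apply, MvPolynomial.comp_aeval_apply] at h1
    have hv : (fun i => phiq (![Az d, Cz d, Gz d] i))
        = (fun i => phiq (![1, PowerSeries.C 2 * PowerSeries.X, 0] i)) := by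
      funext i
      fin_cases i
      · exact hA
      · exact hC
      · exact hG
    rw [hv, ← MvPolynomial.comp_aeval_apply, ← MvPolynomial.comp_aeval_apply] at h1
    have h2 := phiq_dvd h1
    have hval : MvPolynomial.aeval ![1, PowerSeries.C (2:ℤ) * PowerSeries.X, 0] f1
        - MvPolynomial.aeval ![1, PowerSeries.C (2:ℤ) * PowerSeries.X, 0] f2
        = (PowerSeries.C 2 * PowerSeries.X)^3 - (PowerSeries.C 2 * PowerSeries.X)^2 := by
      simp only [f1, f2, map_add, map_mul, map_pow, map_ofNat, MvPolynomial.aeval_X,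
        Matrix.cons_val_zero, Matrix.cons_val_one, Matrix.head_cons, Matrix.cons_val_two,
        Matrix.tail_cons, map_one]
      ring
    rw [hval, PowerSeries.X_pow_dvd_iff] at h2
    have h3 := h2 2 (by norm_num)
    rw [map_sub, mul_pow, mul_pow, ← map_pow, ← map_pow, PowerSeries.coeff_C_mul,
      PowerSeries.coeff_C_mul, PowerSeries.coeff_X_pow, PowerSeries.coeff_X_pow] at h3
    norm_num at h3
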